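/- arXiv:2210.06583 — 2 statements merged into one kernel-verified Lean document; each statement's English description precedes it below -/
import Mathlib

section
/- Let A ∈ ℂ^{N×N} be a complex matrix, B ∈ ℂ^N a complex vector, and u : ℝ → ℂ a continuous function. Define x : ℝ → ℂ^N by x(t) = ∫_0^t e^{(t−s)A} B u(s) ds, where e^{M} denotes the matrix exponential. Then x(0) = 0 and, for every t ∈ ℝ, x is differentiable at t with derivative x′(t) = A x(t) + B u(t). (The convolution form of the 1D state space model solves its defining linear ODE.) -/
open MeasureTheory intervalIntegral

set_option maxHeartbeats 1000000

section aux

attribute [local instance] Matrix.linftyOpNormedRing Matrix.linftyOpNormedAlgebra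

/-- `mulVec` as an ℝ-linear map in the matrix argument. -/
noncomputable def matL (N : ℕ) :
    Matrix (Fin N) (Fin N) ℂ →ₗ[ℝ] ((Fin N → ℂ) →L[ℝ] (Fin N → ℂ)) where
  toFun M := LinearMap.toContinuousLinearMap (M.mulVecLin.restrictScalars ℝ)
  map_add' M₁ M₂ := by
    ext v i
    simp [Matrix.add_mulVec]
  map_smul' r M := by
    ext v i
    simp [Matrix.mulVec, dotProduct, Finset.smul_sum, Matrix.smul_apply,
      smul_mul_assoc, mul_assoc]

/-- `mulVec` as a continuous ℝ-linear map in the matrix argument. -/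
noncomputable def matCLM (N : ℕ) :
    Matrix (Fin N) (Fin N) ℂ →L[ℝ] ((Fin N → ℂ) →L[ℝ] (Fin N → ℂ)) :=
  LinearMap.toContinuousLinearMap (matL N)

lemma matCLM_apply {N : ℕ} (M : Matrix (Fin N) (Fin N) ℂ) (v : Fin N → ℂ) :
    matCLM N M v = M.mulVec v := rfl

lemma exp_smul_continuous {N : ℕ} (A : Matrix (Fin N) (Fin N) ℂ) :
    Continuous fun s : ℝ => NormedSpace.exp ((-s) • A) :=
  NormedSpace.exp_continuous.comp (continuous_neg.smul continuous_const)

lemma hasDerivAt_exp_smul {N : ℕ} (A : Matrix (Fin N) (Fin N) ℂ) (t : ℝ) :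
    HasDerivAt (fun r : ℝ => matCLM N (NormedSpace.exp (r • A)))
      (matCLM N (A * NormedSpace.exp (t • A))) t := by
  have hE : HasDerivAt (fun r : ℝ => NormedSpace.exp (r • A))
      (A * NormedSpace.exp (t • A)) t := by
    exact hasDerivAt_exp_smul_const' (𝕂 := ℝ) (𝔸 := Matrix (Fin N) (Fin N) ℂ) A t
  exact (matCLM N).hasFDerivAt.comp_hasDerivAt t hE

end aux

/-- **The convolution form of the 1D state space model solves its defining linear ODE.**
For `A ∈ ℂ^{N×N}`, `B ∈ ℂ^N` and continuous `u : ℝ → ℂ`, the state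
`x(t) = ∫_0^t e^{(t−s)A} B u(s) ds` satisfies `x(0) = 0` and
`x′(t) = A x(t) + B u(t)` for all `t`. -/
theorem ssm_state_solves_ode {N : ℕ}
    (A : Matrix (Fin N) (Fin N) ℂ) (B : Fin N → ℂ)
    (u : ℝ → ℂ) (hu : Continuous u)
    (x : ℝ → (Fin N → ℂ))
    (hx : ∀ t : ℝ, x t =
      ∫ s in (0:ℝ)..t, u s • (NormedSpace.exp ((t - s) • A)).mulVec B) :
    x 0 = 0 ∧ ∀ t : ℝ, HasDerivAt x (A.mulVec (x t) + u t • B) t := by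
  set f : ℝ → Fin N → ℂ :=
    fun s => u s • (NormedSpace.exp ((-s) • A)).mulVec B with hf_def
  have hf : Continuous f :=
    hu.smul ((exp_smul_continuous A).matrix_mulVec continuous_const)
  set y : ℝ → Fin N → ℂ := fun t => ∫ s in (0:ℝ)..t, f s with hy_def
  have hcomm : ∀ a b : ℝ, Commute (a • A) (b • A) :=
    fun a b => ((Commute.refl A).smul_left a).smul_right b
  have hsplit : ∀ t s : ℝ,
      NormedSpace.exp ((t - s) • A)
        = NormedSpace.exp (t • A) * NormedSpace.exp ((-s) • A) := by
    intro t s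
    rw [← Matrix.exp_add_of_commute _ _ (hcomm t (-s))]
    congr 1
    rw [sub_smul, neg_smul, sub_eq_add_neg]
  have key : ∀ t : ℝ, x t = matCLM N (NormedSpace.exp (t • A)) (y t) := by
    intro t
    rw [hx t]
    have : ∀ s : ℝ, u s • (NormedSpace.exp ((t - s) • A)).mulVec B
        = matCLM N (NormedSpace.exp (t • A)) (f s) := by
      intro s
      rw [matCLM_apply, hf_def, Matrix.mulVec_smul, Matrix.mulVec_mulVec, hsplit t s]
    simp_rw [this]
    rw [(matCLM N (NormedSpace.exp (t • A))).intervalIntegral_comp_comm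
      (hf.intervalIntegrable 0 t)]
  constructor
  · rw [key 0]
    simp [hy_def, intervalIntegral.integral_same]
  · intro t
    have hy : HasDerivAt y (f t) t := (Continuous.integral_hasStrictDerivAt (E := Fin N → ℂ) hf 0 t).hasDerivAt
    have hc := hasDerivAt_exp_smul A t
    have main := hc.clm_apply hy
    have hxeq : x = fun r => matCLM N (NormedSpace.exp (r • A)) (y r) :=
      funext key
    have h1 : (matCLM N (A * NormedSpace.exp (t • A))) (y t)
        = A.mulVec (x t) := by
      rw [matCLM_apply, ← Matrix.mulVec_mulVec, key t, matCLM_apply]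
    have h2 : (matCLM N (NormedSpace.exp (t • A))) (f t) = u t • B := by
      rw [matCLM_apply, hf_def, Matrix.mulVec_smul, Matrix.mulVec_mulVec,
        ← Matrix.exp_add_of_commute _ _ (hcomm t (-t))]
      have h0 : t • A + (-t) • A = 0 := by
        rw [neg_smul, add_neg_cancel]
      rw [h0, NormedSpace.exp_zero, Matrix.one_mulVec]
    rw [h1, h2] at main
    rw [← hxeq] at main
    exact main
end

section
/- Let A^(1) ∈ ℂ^{N1×N1}, A^(2) ∈ ℂ^{N2×N2}, B^(1) ∈ ℂ^{N1}, B^(2) ∈ ℂ^{N2}, and let u : ℝ² → ℂ be continuous. Define the 2D SSM state x(t1,t2) = ∫_0^{t1} ∫_0^{t2} (e^{(t1−s1)A^(1)} B^(1)) ⊗ (e^{(t2−s2)A^(2)} B^(2)) u(s1,s2) ds2 ds1 and the partial state x_{1}(t1,t2) = ∫_0^{t2} e^{(t2−s2)A^(2)} B^(2) u(t1,s2) ds2 ∈ ℂ^{N2}. Then for all t1, t2 ≥ 0, the map t1 ↦ x(t1,t2) is differentiable and ∂x/∂t1 (t1,t2) = A^(1) ·^(1) x(t1,t2) + B^(1)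 ⊗ x_{1}(t1,t2), where (A^(1) ·^(1) X)_{n1,n2} = Σ_m A^(1)_{n1,m} X_{m,n2}. -/
open MeasureTheory intervalIntegral

/-- Entrywise derivative of `t ↦ exp(t • A)` for a complex matrix. -/
lemma expEntry_hasDerivAt {N : ℕ} (A : Matrix (Fin N) (Fin N) ℂ) (i j : Fin N) (t : ℝ) :
    HasDerivAt (fun r : ℝ => NormedSpace.exp (r • A) i j)
      ((A * NormedSpace.exp (t • A)) i j) t := by
  letI : SeminormedRing (Matrix (Fin N) (Fin N) ℂ) := Matrix.linftyOpSemiNormedRing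
  letI : NormedRing (Matrix (Fin N) (Fin N) ℂ) := Matrix.linftyOpNormedRing
  letI : NormedAlgebra ℝ (Matrix (Fin N) (Fin N) ℂ) := Matrix.linftyOpNormedAlgebra
  letI : NormedAlgebra ℂ (Matrix (Fin N) (Fin N) ℂ) := Matrix.linftyOpNormedAlgebra
  have h := hasDerivAt_exp_smul_const' (𝕂 := ℝ) A t
  let L : Matrix (Fin N) (Fin N) ℂ →ₗ[ℂ] ℂ :=
    { toFun := fun X => X i j
      map_add' := fun X Y => rfl
      map_smul' := fun c X => rfl }
  have hL := ((LinearMap.toContinuousLinearMap L).restrictScalars ℝ).hasFDerivAt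
    (x := NormedSpace.exp (t • A))
  exact hL.comp_hasDerivAt t h

lemma expEntry_cont {N : ℕ} (A : Matrix (Fin N) (Fin N) ℂ) (i j : Fin N) :
    Continuous fun t : ℝ => NormedSpace.exp (t • A) i j :=
  continuous_iff_continuousAt.2 fun t => (expEntry_hasDerivAt A i j t).differentiableAt.continuousAt

/-- Continuity of a parametric interval integral with jointly continuous integrand. -/
lemma contParam {E : Type*} [NormedAddCommGroup E] [NormedSpace ℝ E]
    {F : ℝ → ℝ → E} (hF : Continuous fun p : ℝ × ℝ => F p.1 p.2) (a b : ℝ) :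
    Continuous fun s : ℝ => ∫ r in a..b, F s r := by
  rw [continuous_iff_continuousAt]
  intro s₀
  obtain ⟨C, hC⟩ := (IsCompact.exists_bound_of_continuousOn
    ((isCompact_Icc (a := s₀ - 1) (b := s₀ + 1)).prod (isCompact_uIcc (a := a) (b := b)))
    hF.continuousOn)
  apply intervalIntegral.continuousAt_of_dominated_interval
    (bound := fun _ => C) (Filter.Eventually.of_forall fun s =>
      (hF.comp (continuous_const.prodMk continuous_id)).aestronglyMeasurable)
  · filter_upwards [Icc_mem_nhds (by linarith : s₀ - 1 < s₀) (by linarith : s₀ < s₀ + 1)]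
      with s hs
    exact Filter.Eventually.of_forall fun r hr =>
      hC (s, r) ⟨hs, Set.uIoc_subset_uIcc hr⟩
  · exact intervalIntegrable_const
  · exact Filter.Eventually.of_forall fun r _ =>
      (hF.comp (continuous_id.prodMk continuous_const)).continuousAt

noncomputable def contrCLM {N1 N2 : ℕ} (A : Matrix (Fin N1) (Fin N1) ℂ) :
    (Fin N1 → Fin N2 → ℂ) →L[ℂ] (Fin N1 → Fin N2 → ℂ) :=
  LinearMap.toContinuousLinearMap
    { toFun := fun X n1 n2 => ∑ m, A n1 m * X m n2
      map_add' := fun X Y => by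
        funext n1 n2
        simp [mul_add, Finset.sum_add_distrib]
      map_smul' := fun c X => by
        funext n1 n2
        simp [Finset.mul_sum, smul_eq_mul, mul_left_comm] }

@[simp] lemma contrCLM_apply {N1 N2 : ℕ} (A : Matrix (Fin N1) (Fin N1) ℂ)
    (X : Fin N1 → Fin N2 → ℂ) (n1 : Fin N1) (n2 : Fin N2) :
    contrCLM A X n1 n2 = ∑ m, A n1 m * X m n2 := rfl

noncomputable def tensCLM {N1 N2 : ℕ} (b : Fin N1 → ℂ) :
    (Fin N2 → ℂ) →L[ℂ] (Fin N1 → Fin N2 → ℂ) :=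
  LinearMap.toContinuousLinearMap
    { toFun := fun w n1 n2 => b n1 * w n2
      map_add' := fun w w' => by funext n1 n2; simp [mul_add]
      map_smul' := fun c w => by funext n1 n2; simp [smul_eq_mul]; ring }

@[simp] lemma tensCLM_apply {N1 N2 : ℕ} (b : Fin N1 → ℂ) (w : Fin N2 → ℂ)
    (n1 : Fin N1) (n2 : Fin N2) : tensCLM b w n1 n2 = b n1 * w n2 := rfl

lemma expM_add {N : ℕ} (A : Matrix (Fin N) (Fin N) ℂ) (a b : ℝ) :
    NormedSpace.exp ((a + b) • A) =
      NormedSpace.exp (a • A) * NormedSpace.exp (b • A) := by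
  rw [add_smul]
  exact Matrix.exp_add_of_commute (𝔸 := ℂ) _ _ (((Commute.refl A).smul_left a).smul_right b)

lemma expM_zero {N : ℕ} (A : Matrix (Fin N) (Fin N) ℂ) :
    NormedSpace.exp ((0 : ℝ) • A) = 1 := by
  rw [zero_smul, NormedSpace.exp_zero]
/-- **Differential equation for the 2D SSM state in the first time axis.**
With state
`x(t1,t2) = ∫_0^{t1}∫_0^{t2} (e^{(t1−s1)A1}B1) ⊗ (e^{(t2−s2)A2}B2) u(s1,s2) ds2 ds1`
(a tensor in `ℂ^{N1×N2}`, `(a ⊗ b)_{n1,n2} = a_{n1} b_{n2}`) and partial state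
`x₁(t1,t2) = ∫_0^{t2} e^{(t2−s2)A2}B2 u(t1,s2) ds2`, for all `t1, t2 ≥ 0` the
map `t1 ↦ x(t1,t2)` is differentiable with
`∂x/∂t1 = A1 ·⁽¹⁾ x(t1,t2) + B1 ⊗ x₁(t1,t2)`, where
`(A1 ·⁽¹⁾ X)_{n1,n2} = Σ_m (A1)_{n1,m} X_{m,n2}`. -/
theorem ssm2d_state_partial_deriv_fst {N1 N2 : ℕ}
    (A1 : Matrix (Fin N1) (Fin N1) ℂ) (A2 : Matrix (Fin N2) (Fin N2) ℂ)
    (B1 : Fin N1 → ℂ) (B2 : Fin N2 → ℂ)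
    (u : ℝ → ℝ → ℂ) (hu : Continuous fun p : ℝ × ℝ => u p.1 p.2)
    (x : ℝ → ℝ → (Fin N1 → Fin N2 → ℂ))
    (hx : ∀ t1 t2 : ℝ, x t1 t2 =
      ∫ s1 in (0:ℝ)..t1, ∫ s2 in (0:ℝ)..t2,
        u s1 s2 • fun n1 n2 =>
          (NormedSpace.exp ((t1 - s1) • A1)).mulVec B1 n1 *
          (NormedSpace.exp ((t2 - s2) • A2)).mulVec B2 n2)
    (x1 : ℝ → ℝ → (Fin N2 → ℂ))
    (hx1 : ∀ t1 t2 : ℝ, x1 t1 t2 =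
      ∫ s2 in (0:ℝ)..t2,
        u t1 s2 • (NormedSpace.exp ((t2 - s2) • A2)).mulVec B2) :
    ∀ t1 t2 : ℝ, 0 ≤ t1 → 0 ≤ t2 →
      HasDerivAt (fun r : ℝ => x r t2)
        ((fun n1 n2 => ∑ m, A1 n1 m * x t1 t2 m n2) +
          fun n1 n2 => B1 n1 * x1 t1 t2 n2) t1 := by
  intro t1 t2 ht1 ht2
  -- continuity of `s2 ↦ exp((t2-s2)•A2) *ᵥ B2`
  have hvc : Continuous fun s2 : ℝ => (NormedSpace.exp ((t2 - s2) • A2)).mulVec B2 := by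
    apply continuous_pi; intro n2
    simp only [Matrix.mulVec, dotProduct]
    exact continuous_finset_sum _ fun m _ =>
      ((expEntry_cont A2 n2 m).comp (continuous_const.sub continuous_id)).mul continuous_const
  -- continuity of `s1 ↦ x1 s1 t2`
  have hX1c : Continuous fun s1 : ℝ => x1 s1 t2 := by
    have h : (fun s1 : ℝ => x1 s1 t2)
        = fun s1 => ∫ s2 in (0:ℝ)..t2,
            u s1 s2 • (NormedSpace.exp ((t2 - s2) • A2)).mulVec B2 :=
      funext fun s1 => hx1 s1 t2
    rw [h]
    exact contParam (hu.smul (hvc.comp continuous_snd)) 0 t2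
  -- continuity of `g`
  have hgc : Continuous fun s1 : ℝ =>
      (fun n1 n2 => (NormedSpace.exp ((-s1) • A1)).mulVec B1 n1 * x1 s1 t2 n2 :
        Fin N1 → Fin N2 → ℂ) := by
    apply continuous_pi; intro n1; apply continuous_pi; intro n2
    apply Continuous.mul
    · simp only [Matrix.mulVec, dotProduct]
      exact continuous_finset_sum _ fun m _ =>
        ((expEntry_cont A1 n1 m).comp continuous_neg).mul continuous_const
    · exact (continuous_apply n2).comp hX1c
  -- inner integrand integrability
  have hIv : ∀ s1 : ℝ, IntervalIntegrable
      (fun s2 => u s1 s2 • (NormedSpace.exp ((t2 - s2) • A2)).mulVec B2) volume 0 t2 :=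
    fun s1 =>
      ((hu.comp (continuous_const.prodMk continuous_id)).smul hvc).intervalIntegrable 0 t2
  -- key representation
  have KEY : ∀ r : ℝ, x r t2 = contrCLM (NormedSpace.exp (r • A1))
      (∫ s1 in (0:ℝ)..r, fun n1 n2 =>
        (NormedSpace.exp ((-s1) • A1)).mulVec B1 n1 * x1 s1 t2 n2) := by
    intro r
    rw [hx r t2, ← ContinuousLinearMap.intervalIntegral_comp_comm _ (hgc.intervalIntegrable 0 r)]
    apply intervalIntegral.integral_congr
    intro s1 _
    have hc : contrCLM (N2 := N2) (NormedSpace.exp (r • A1))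
        (fun n1 n2 => (NormedSpace.exp ((-s1) • A1)).mulVec B1 n1 * x1 s1 t2 n2)
        = tensCLM ((NormedSpace.exp ((r - s1) • A1)).mulVec B1) (x1 s1 t2) := by
      funext n1 n2
      have h2 : NormedSpace.exp ((r - s1) • A1)
          = NormedSpace.exp (r • A1) * NormedSpace.exp ((-s1) • A1) := by
        rw [sub_eq_add_neg, expM_add]
      simp only [contrCLM_apply, tensCLM_apply, h2, ← Matrix.mulVec_mulVec]
      simp [Matrix.mulVec, dotProduct, Finset.sum_mul, mul_assoc]
    beta_reduce
    rw [hc, hx1 s1 t2, ← ContinuousLinearMap.intervalIntegral_comp_comm _ (hIv s1)]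
    apply intervalIntegral.integral_congr
    intro s2 _
    beta_reduce
    rw [_root_.map_smul]
    rfl
  -- FTC for `y`
  have hyd : HasDerivAt (fun t : ℝ => ∫ s1 in (0:ℝ)..t,
        (fun n1 n2 => (NormedSpace.exp ((-s1) • A1)).mulVec B1 n1 * x1 s1 t2 n2 :
          Fin N1 → Fin N2 → ℂ))
      (fun n1 n2 => (NormedSpace.exp ((-t1) • A1)).mulVec B1 n1 * x1 t1 t2 n2) t1 :=
    intervalIntegral.integral_hasDerivAt_right (hgc.intervalIntegrable 0 t1)
      (hgc.stronglyMeasurableAtFilter _ _) hgc.continuousAt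
  have hy : ∀ (m : Fin N1) (n2 : Fin N2), HasDerivAt
      (fun r : ℝ => (∫ s1 in (0:ℝ)..r,
        (fun n1' n2' => (NormedSpace.exp ((-s1) • A1)).mulVec B1 n1' * x1 s1 t2 n2' :
          Fin N1 → Fin N2 → ℂ)) m n2)
      ((NormedSpace.exp ((-t1) • A1)).mulVec B1 m * x1 t1 t2 n2) t1 :=
    fun m n2 => (hasDerivAt_pi.1 ((hasDerivAt_pi.1 hyd) m)) n2
  have hfun : (fun r : ℝ => x r t2) = fun r => contrCLM (NormedSpace.exp (r • A1))
      (∫ s1 in (0:ℝ)..r, fun n1 n2 =>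
        (NormedSpace.exp ((-s1) • A1)).mulVec B1 n1 * x1 s1 t2 n2) :=
    funext fun r => KEY r
  rw [hfun]
  refine hasDerivAt_pi.2 fun n1 => hasDerivAt_pi.2 fun n2 => ?_
  simp only [contrCLM_apply, Pi.add_apply]
  have hD := HasDerivAt.fun_sum (u := Finset.univ)
    (fun m _ => (expEntry_hasDerivAt A1 n1 m t1).fun_mul (hy m n2))
  convert hD using 1
  rw [Finset.sum_add_distrib]
  congr 1
  · -- first summand
    have hxco : ∀ k : Fin N1, x t1 t2 k n2 = ∑ m', NormedSpace.exp (t1 • A1) k m' *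
        (∫ s1 in (0:ℝ)..t1, fun n1' n2' =>
          (NormedSpace.exp ((-s1) • A1)).mulVec B1 n1' * x1 s1 t2 n2' :
            Fin N1 → Fin N2 → ℂ) m' n2 := by
      intro k; rw [KEY t1]; rfl
    simp_rw [Matrix.mul_apply, Finset.sum_mul]
    rw [Finset.sum_comm]
    simp_rw [mul_assoc, ← Finset.mul_sum]
    exact Finset.sum_congr rfl fun k _ => by rw [hxco k]
  · -- second summand
    simp_rw [← mul_assoc]
    rw [← Finset.sum_mul]
    congr 1
    have h1 : NormedSpace.exp (t1 • A1) * NormedSpace.exp ((-t1) • A1) = 1 := by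
      have h0 : t1 + -t1 = 0 := by ring
      rw [← expM_add, h0, expM_zero]
    calc B1 n1 = ((NormedSpace.exp (t1 • A1) *
          NormedSpace.exp ((-t1) • A1)).mulVec B1) n1 := by
          rw [h1, Matrix.one_mulVec]
      _ = ∑ m, NormedSpace.exp (t1 • A1) n1 m *
          (NormedSpace.exp ((-t1) • A1)).mulVec B1 m := by
          rw [← Matrix.mulVec_mulVec]
          simp [Matrix.mulVec, dotProduct]
end
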